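/- Let n ≥ 0, let K be an algebraically closed field of characteristic zero, and for 1 ≤ k ≤ n define f_k = Σ_{i=k}^n x_i · ∏_{j=1}^{k−1} (x_j − x_i) ∈ K[x_1,…,x_n]. If (t_1,…,t_n) ∈ K^n satisfies f_1(t) = f_2(t) = … = f_n(t) = 0, then t_k = 0 for all k. In particular the polynomials f_1,…,f_n have the origin as their only common zero in K^n. -/

import Mathlib

open MvPolynomial Finset

section Aux
variable {K : Type*} [CommRing K] {n : ℕ} (t : Fin n → K)

/-- Generalized power sums `S k m = Σ_{i ≥ k} t_i^m ∏_{j < k} (t_j - t_i)`. -/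
private noncomputable def Sgen (k m : ℕ) : K :=
  ∑ i ∈ univ.filter (fun i : Fin n => k ≤ i.val),
    t i ^ m * ∏ j ∈ univ.filter (fun j : Fin n => j.val < k), (t j - t i)

private lemma Sgen_of_le (k m : ℕ) (hk : n ≤ k) : Sgen t k m = 0 := by
  unfold Sgen
  refine Finset.sum_eq_zero fun i hi => ?_
  exfalso
  simp only [mem_filter] at hi
  omega

private lemma Sgen_rec (k m : ℕ) (hk : k < n) :
    Sgen t k (m + 1) = t ⟨k, hk⟩ * Sgen t k m - Sgen t (k + 1) m := by
  have hfj : (univ.filter (fun j : Fin n => j.val < k + 1)) =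
      insert ⟨k, hk⟩ (univ.filter (fun j : Fin n => j.val < k)) := by
    ext j; simp [Nat.lt_succ_iff_lt_or_eq, Fin.ext_iff]; omega
  have hfi : (univ.filter (fun i : Fin n => k ≤ i.val)) =
      insert ⟨k, hk⟩ (univ.filter (fun i : Fin n => k + 1 ≤ i.val)) := by
    ext i; simp [Fin.ext_iff]; omega
  have hnotmem : (⟨k, hk⟩ : Fin n) ∉ univ.filter (fun j : Fin n => j.val < k) := by simp
  have hnotmem' : (⟨k, hk⟩ : Fin n) ∉ univ.filter (fun i : Fin n => k + 1 ≤ i.val) := by simp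
  have key : Sgen t (k + 1) m =
      ∑ i ∈ univ.filter (fun i : Fin n => k ≤ i.val),
        t i ^ m * ((t ⟨k, hk⟩ - t i) *
          ∏ j ∈ univ.filter (fun j : Fin n => j.val < k), (t j - t i)) := by
    unfold Sgen
    rw [hfi, Finset.sum_insert hnotmem']
    simp only [sub_self, zero_mul, mul_zero, zero_add]
    refine Finset.sum_congr rfl fun i hi => ?_
    rw [hfj, Finset.prod_insert hnotmem]
  rw [key]
  unfold Sgen
  rw [Finset.mul_sum, ← Finset.sum_sub_distrib]
  refine Finset.sum_congr rfl fun i hi => ?_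
  ring

private lemma Sgen_zero (h1 : ∀ k : ℕ, k < n → Sgen t k 1 = 0) :
    ∀ m k : ℕ, Sgen t k (m + 1) = 0 := by
  intro m
  induction m with
  | zero =>
    intro k
    rcases lt_or_ge k n with hk | hk
    · exact h1 k hk
    · exact Sgen_of_le t k 1 hk
  | succ m ih =>
    intro k
    rcases lt_or_ge k n with hk | hk
    · rw [Sgen_rec t k (m + 1) hk, ih k, ih (k + 1), mul_zero, sub_zero]
    · exact Sgen_of_le t k (m + 2) hk

end Aux

section Aux2
variable {K : Type*} [Field K]

private lemma esymm_eval_zero [CharZero K] (n : ℕ) (t : Fin n → K)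
    (hp : ∀ m : ℕ, 1 ≤ m → eval t (psum (Fin n) K m) = 0) :
    ∀ k : ℕ, 1 ≤ k → eval t (esymm (Fin n) K k) = 0 := by
  intro k hk
  have h := congrArg (eval t) (MvPolynomial.mul_esymm_eq_sum (Fin n) K k)
  simp only [map_mul, map_sum, map_pow, map_neg, map_one, map_natCast] at h
  have hrhs : ∑ a ∈ Finset.HasAntidiagonal.antidiagonal k with a.1 < k,
      (-1:K) ^ a.1 * eval t (esymm (Fin n) K a.1) * eval t (psum (Fin n) K a.2) = 0 := by
    refine Finset.sum_eq_zero fun a ha => ?_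
    simp only [Finset.mem_filter, Finset.HasAntidiagonal.mem_antidiagonal] at ha
    rw [hp a.2 (by omega), mul_zero]
  rw [hrhs, mul_zero] at h
  have hk0 : (k : K) ≠ 0 := Nat.cast_ne_zero.mpr (by omega)
  exact (mul_eq_zero.mp h).resolve_left hk0

private lemma zero_of_esymm_eval_zero (n : ℕ) (t : Fin n → K)
    (he : ∀ k : ℕ, 1 ≤ k → eval t (esymm (Fin n) K k) = 0) (j : Fin n) :
    t j = 0 := by
  classical
  set s : Multiset K := Multiset.map t Finset.univ.val with hs
  have hcard : Multiset.card s = n := by simp [hs]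
  have hesymm : ∀ m : ℕ, s.esymm m = eval t (esymm (Fin n) K m) := by
    intro m
    rw [← MvPolynomial.aeval_esymm_eq_multiset_esymm (Fin n) K m t, aeval_def,
      Algebra.algebraMap_self]
    rfl
  set P : Polynomial K := (s.map fun r => Polynomial.X - Polynomial.C r).prod with hP
  have hP2 : P = ∏ i : Fin n, (Polynomial.X - Polynomial.C (t i)) := by
    rw [hP, hs, Multiset.map_map]; rfl
  have hPeval : P.eval (t j) = 0 := by
    rw [hP2, Polynomial.eval_prod]
    exact Finset.prod_eq_zero (Finset.mem_univ j) (by simp)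
  have hdeg : P.natDegree ≤ n := by
    rw [hP2]
    refine le_trans (Polynomial.natDegree_prod_le _ _) ?_
    simp [Polynomial.natDegree_X_sub_C]
  have hcoeff : ∀ k : ℕ, k < n → P.coeff k = 0 := by
    intro k hkn
    rw [hP, Multiset.prod_X_sub_C_coeff s (by omega : k ≤ Multiset.card s), hcard,
      hesymm, he (n - k) (by omega), mul_zero]
  have hcn : P.coeff n = 1 := by
    rw [hP, Multiset.prod_X_sub_C_coeff s (by omega : n ≤ Multiset.card s), hcard]
    simp [Multiset.esymm]
  have h0 : (0:K) = t j ^ n := by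
    rw [← hPeval, Polynomial.eval_eq_sum_range' (lt_of_le_of_lt hdeg (Nat.lt_succ_self n)),
      Finset.sum_range_succ, hcn, one_mul,
      Finset.sum_eq_zero fun k hk => by
        rw [hcoeff k (Finset.mem_range.mp hk), zero_mul], zero_add]
  have hn : n ≠ 0 := by rintro rfl; exact j.elim0
  exact pow_eq_zero_iff hn |>.mp h0.symm

end Aux2

/-- If all the polynomials `f_k = Σ_{i=k}^n x_i ∏_{j=1}^{k-1} (x_j - x_i)` vanish at a
point `t` of `K^n` (`K` algebraically closed of characteristic zero), then `t = 0`;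
i.e. the origin is the only common zero of `f_1, …, f_n`.  Everything is 0-indexed:
`k : Fin n` corresponds to `k+1 ∈ {1,…,n}`. -/
theorem common_zero_is_origin (K : Type*) [Field K] [IsAlgClosed K] [CharZero K]
    (n : ℕ) (t : Fin n → K)
    (h : ∀ k : Fin n,
      eval t (∑ i ∈ Finset.univ.filter (fun i : Fin n => k ≤ i),
        X i * ∏ j ∈ Finset.univ.filter (fun j : Fin n => j < k),
          (X j - X i : MvPolynomial (Fin n) K)) = 0) :
    ∀ k : Fin n, t k = 0 := by
  -- translate the hypothesis into `Sgen t k 1 = 0`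
  have h1 : ∀ k : ℕ, k < n → Sgen t k 1 = 0 := by
    intro k hk
    have hk' := h ⟨k, hk⟩
    simp only [map_sum, map_mul, map_prod, map_sub, eval_X] at hk'
    unfold Sgen
    rw [← hk']
    refine Finset.sum_congr ?_ fun i hi => ?_
    · ext i; simp [Fin.le_def]
    · rw [pow_one]
      rfl
  have hS := Sgen_zero t h1
  -- all power sums vanish
  have hp : ∀ m : ℕ, 1 ≤ m → eval t (psum (Fin n) K m) = 0 := by
    intro m hm
    obtain ⟨m', rfl⟩ : ∃ m', m = m' + 1 := ⟨m - 1, by omega⟩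
    have := hS m' 0
    unfold Sgen at this
    rw [← this]
    simp [psum, eval_sum]
  exact zero_of_esymm_eval_zero n t (esymm_eval_zero n t hp)
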